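/- arXiv:2501.13659 — 4 statements merged into one kernel-verified Lean document; each statement's English description precedes it below -/
import Mathlib

section
/- Let b be a prime, let m ≥ 1 and s ≥ 1 be integers, and let C_1, …, C_s be m×m matrices over 𝔽_b with ρ_m(C_1,…,C_s) ≥ m − t for some integer t with 0 ≤ t ≤ m (as holds for the generating matrices of a digital (t,m,s)-net over 𝔽_b). Let 0 = w_1 ≤ w_2 ≤ ⋯ ≤ w_s be nonnegative integers and let C̃_1, …, C̃_s be the corresponding row reduced matrices. Then ρ_m(C̃_1,…,C̃_s) ≥ max{0, m − max{t, w_s}}. -/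
open scoped BigOperators

/-- Linear independence of the system consisting of the first `d j` rows of each matrix `C j`. -/
def rowsLinIndep (b m : ℕ) {ι : Type*} (C : ι → Matrix (Fin m) (Fin m) (ZMod b))
    (d : ι → ℕ) : Prop :=
  LinearIndependent (ZMod b)
    (fun p : {p : ι × Fin m // (p.2 : ℕ) < d p.1} => C p.1.1 p.1.2)

/-- The linear independence parameter `ρ_m(C_1,…,C_s)`: the largest `d ∈ {0,…,m}` such that
for every choice of nonnegative integers `d_j` summing to `d`, the collection of the first `d_j`
rows of the matrices is linearly independent. -/
noncomputable def rho (b m : ℕ) {ι : Type*} [Fintype ι]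
    (C : ι → Matrix (Fin m) (Fin m) (ZMod b)) : ℕ :=
  sSup {d | d ≤ m ∧ ∀ dv : ι → ℕ, (∑ j, dv j) = d → rowsLinIndep b m C dv}

/-- Row reduced matrix: the last `min m w` rows are set to zero. -/
def rowReduced {b m : ℕ} (C : Matrix (Fin m) (Fin m) (ZMod b)) (w : ℕ) :
    Matrix (Fin m) (Fin m) (ZMod b) :=
  Matrix.of fun i r => if (i : ℕ) < m - min m w then C i r else 0

/-- Column-row reduced matrix: the last `min m w` rows and columns are set to zero. -/
def colRowReduced {b m : ℕ} (C : Matrix (Fin m) (Fin m) (ZMod b)) (w : ℕ) :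
    Matrix (Fin m) (Fin m) (ZMod b) :=
  Matrix.of fun i r => if (i : ℕ) < m - min m w ∧ (r : ℕ) < m - min m w then C i r else 0

/-- Reduced matrix with possibly different row/column reduction indices. -/
def colRowReduced' {b m : ℕ} (C : Matrix (Fin m) (Fin m) (ZMod b)) (wr wc : ℕ) :
    Matrix (Fin m) (Fin m) (ZMod b) :=
  Matrix.of fun i r => if (i : ℕ) < m - min m wr ∧ (r : ℕ) < m - min m wc then C i r else 0

/-- Upper-left `m × m` submatrix of an infinite matrix. -/
def upperLeft {b : ℕ} (C : Matrix ℕ ℕ (ZMod b)) (m : ℕ) : Matrix (Fin m) (Fin m) (ZMod b) :=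
  Matrix.of fun i r => C (i : ℕ) (r : ℕ)

/-- The `k`-th coordinate value produced by the digital method with generating matrix `C`. -/
noncomputable def digitalPoint (b m : ℕ) (C : Matrix (Fin m) (Fin m) (ZMod b)) (k : ℕ) : ℝ :=
  ∑ i : Fin m,
    ((C.mulVec fun r : Fin m => ((k / b ^ (r : ℕ)) % b : ZMod b)) i).val
      / (b : ℝ) ^ ((i : ℕ) + 1)

open Classical in
/-- The `b^m` points `P 0, …, P (b^m - 1)` form a `(t,m,|ι|)`-net in base `b` (counted with
multiplicity): every elementary interval of volume `b^(t-m)` contains exactly `b^t` points. -/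
def isNet (b m t : ℕ) {ι : Type*} [Fintype ι] (P : ℕ → ι → ℝ) : Prop :=
  ∀ d a : ι → ℕ, (∀ j, a j < b ^ d j) → (∑ j, d j) = m - t →
    ((Finset.range (b ^ m)).filter fun k =>
        ∀ j, (a j : ℝ) / (b : ℝ) ^ d j ≤ P k j ∧ P k j < ((a j : ℝ) + 1) / (b : ℝ) ^ d j).card
      = b ^ t

lemma rowsLinIndep_anti {b m : ℕ} {ι : Type*} {C : ι → Matrix (Fin m) (Fin m) (ZMod b)}
    {dv dv' : ι → ℕ} (h : ∀ j, dv j ≤ dv' j) (H : rowsLinIndep b m C dv') :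
    rowsLinIndep b m C dv := by
  exact H.comp
    (fun p : {p : ι × Fin m // (p.2 : ℕ) < dv p.1} =>
      (⟨p.1, lt_of_lt_of_le p.2 (h p.1.1)⟩ : {p : ι × Fin m // (p.2 : ℕ) < dv' p.1}))
    (fun x y hxy => by apply Subtype.ext; exact Subtype.mk_eq_mk.mp hxy)

lemma rho_mem (b m : ℕ) {ι : Type*} [Fintype ι] (C : ι → Matrix (Fin m) (Fin m) (ZMod b)) :
    rho b m C ∈ {d | d ≤ m ∧ ∀ dv : ι → ℕ, (∑ j, dv j) = d → rowsLinIndep b m C dv} := by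
  apply Nat.sSup_mem
  · refine ⟨0, Nat.zero_le _, fun dv hdv => ?_⟩
    have hz : ∀ j, dv j = 0 := by
      intro j
      exact Nat.eq_zero_of_le_zero (hdv ▸ Finset.single_le_sum
        (fun i _ => Nat.zero_le (dv i)) (Finset.mem_univ j))
    haveI : IsEmpty {p : ι × Fin m // (p.2 : ℕ) < dv p.1} :=
      ⟨fun p => absurd p.2 (by simp [hz p.1.1])⟩
    exact linearIndependent_empty_type
  · exact ⟨m, fun d hd => hd.1⟩

/-- lower bound on the linear independence parameter of row reduced matrices:
`ρ_m(C̃_1,…,C̃_s) ≥ max{0, m − max{t, w_s}}`. -/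
theorem rho_rowReduced_ge (b m s t : ℕ) (hb : Nat.Prime b) (hm : 1 ≤ m) (hs : 1 ≤ s)
    (ht : t ≤ m) (C : Fin s → Matrix (Fin m) (Fin m) (ZMod b))
    (hrho : m - t ≤ rho b m C)
    (w : Fin s → ℕ) (hw1 : w ⟨0, hs⟩ = 0) (hwmono : Monotone w) :
    max 0 (m - max t (w ⟨s - 1, by omega⟩)) ≤
      rho b m (fun j => rowReduced (C j) (w j)) := by
  have hmax0 : max 0 (m - max t (w ⟨s - 1, by omega⟩)) = m - max t (w ⟨s - 1, by omega⟩) :=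
    Nat.max_eq_right (Nat.zero_le _)
  rw [hmax0]
  set jl : Fin s := ⟨s - 1, by omega⟩
  set W := w jl with hW
  set d0 := m - max t W with hd0
  obtain ⟨hRle, hRind⟩ := rho_mem b m C
  have hd0le : d0 ≤ rho b m C := le_trans (by omega) hrho
  apply le_csSup ⟨m, fun d hd => hd.1⟩
  refine ⟨Nat.sub_le _ _, fun dv hdv => ?_⟩
  have hdvj : ∀ j, dv j ≤ d0 := fun j =>
    hdv ▸ Finset.single_le_sum (fun i _ => Nat.zero_le (dv i)) (Finset.mem_univ j)
  have hwW : ∀ j : Fin s, w j ≤ W := by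
    intro j
    exact hwmono (by rw [Fin.le_def]; simp only [jl]; omega)
  have hbound : ∀ j : Fin s, dv j ≤ m - min m (w j) := by
    intro j
    have h1 := hdvj j
    have h2 := hwW j
    have h3 : min m (w j) ≤ w j := Nat.min_le_right _ _
    have h4 : W ≤ max t W := le_max_right _ _
    omega
  have key : rowsLinIndep b m C dv := by
    classical
    set dv' : Fin s → ℕ := fun j => dv j + if j = (⟨0, hs⟩ : Fin s) then rho b m C - d0 else 0
      with hdv'
    have hsum : (∑ j, dv' j) = rho b m C := by
      rw [hdv']
      rw [Finset.sum_add_distrib, Finset.sum_ite_eq' Finset.univ (⟨0, hs⟩ : Fin s)]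
      simp [hdv]
      omega
    exact rowsLinIndep_anti (fun j => Nat.le_add_right _ _) (hRind dv' hsum)
  have heq : (fun p : {p : Fin s × Fin m // (p.2 : ℕ) < dv p.1} =>
        rowReduced (C p.1.1) (w p.1.1) p.1.2) =
      (fun p : {p : Fin s × Fin m // (p.2 : ℕ) < dv p.1} => C p.1.1 p.1.2) := by
    funext p
    have : (p.1.2 : ℕ) < m - min m (w p.1.1) := lt_of_lt_of_le p.2 (hbound p.1.1)
    funext r
    simp [rowReduced, this]
  unfold rowsLinIndep at key ⊢
  rw [heq]
  exact key
end

section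
/- Let b be a prime, let m ≥ 1 and s ≥ 1 be integers, and let C_1, …, C_s be m×m matrices over 𝔽_b generating a digital (t,m,s)-net over 𝔽_b, where 0 ≤ t ≤ m. Let 0 = w_1 ≤ w_2 ≤ ⋯ ≤ w_s be nonnegative integers and let C̃_1, …, C̃_s be the corresponding row reduced matrices. Set t̃ := min{m, max{t, w_s}}. Then the b^m points generated by C̃_1, …, C̃_s via the digital method form a (t̃, m, s)-net in base b; that is, every elementary interval ∏_{j=1}^s [a_j b^{−d_j}, (a_j+1) b^{−d_j}) with nonnegative integers d_j and 0 ≤ a_j < b^{d_j} satisfying d_1+⋯+d_s = m − t̃ contains exactly b^{t̃} of the points (counted with multiplicity). -/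
open scoped BigOperators

namespace RRAux

open Finset

def Kv (b n : ℕ) (y : ℕ → ℕ) : ℕ := ∑ i ∈ Finset.range n, y i * b ^ (n - 1 - i)

lemma Kv_congr (b d : ℕ) {y y' : ℕ → ℕ} (h : ∀ i < d, y i = y' i) : Kv b d y = Kv b d y' := by
  refine Finset.sum_congr rfl fun i hi => ?_
  rw [h i (Finset.mem_range.mp hi)]

lemma Kv_lt (b : ℕ) (hb : 1 < b) (n : ℕ) (y : ℕ → ℕ) (hy : ∀ i, y i < b) :
    Kv b n y < b ^ n := by
  induction n generalizing y with
  | zero => simp [Kv]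
  | succ n ih =>
    have h1 : Kv b (n+1) y = Kv b n (fun i => y (i+1)) + y 0 * b ^ n := by
      rw [Kv, Finset.sum_range_succ']
      congr 1
      refine Finset.sum_congr rfl fun i hi => ?_
      congr 2
      omega
    have h2 := ih (fun i => y (i+1)) (fun i => hy (i+1))
    have h3 : y 0 * b ^ n ≤ (b-1) * b ^ n := Nat.mul_le_mul_right _ (by have := hy 0; omega)
    have h4 : b ^ n + (b-1) * b ^ n = b ^ (n+1) := by
      have hb' : 1 + (b-1) = b := by omega
      calc b ^ n + (b-1) * b^n = (1 + (b-1)) * b^n := by ring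
        _ = b * b^n := by rw [hb']
        _ = b^(n+1) := by rw [pow_succ]; ring
    calc Kv b (n+1) y = Kv b n (fun i => y (i+1)) + y 0 * b ^ n := h1
      _ < b ^ n + (b-1) * b ^ n := add_lt_add_of_lt_of_le h2 h3
      _ = b ^ (n+1) := h4

lemma Kv_div (b : ℕ) (hb : 1 < b) {n d : ℕ} (hd : d ≤ n) (y : ℕ → ℕ) (hy : ∀ i, y i < b) :
    Kv b n y / b ^ (n - d) = Kv b d y := by
  have hsplit : Kv b n y = Kv b d y * b ^ (n - d) + Kv b (n - d) (fun j => y (d + j)) := by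
    rw [Kv, ← Finset.sum_range_add_sum_Ico _ hd]
    congr 1
    · rw [Kv, Finset.sum_mul]
      refine Finset.sum_congr rfl fun i hi => ?_
      rw [mul_assoc, ← pow_add]
      simp only [Finset.mem_range] at hi
      congr 2
      omega
    · rw [Finset.sum_Ico_eq_sum_range, Kv]
      refine Finset.sum_congr rfl fun j hj => ?_
      simp only [Finset.mem_range] at hj
      congr 2
      omega
  have htail : Kv b (n-d) (fun j => y (d + j)) < b ^ (n-d) := Kv_lt b hb _ _ fun i => hy _
  rw [hsplit, add_comm, Nat.add_mul_div_right _ _ (pow_pos (by omega) _),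
    Nat.div_eq_of_lt htail, zero_add]

lemma card_filter_congr {α : Type*} {s : Finset α} {p q : α → Prop}
    (hp : DecidablePred p) (hq : DecidablePred q) (h : ∀ x ∈ s, p x ↔ q x) :
    (@Finset.filter α p hp s).card = (@Finset.filter α q hq s).card := by
  congr 1
  ext x
  simp only [Finset.mem_filter]
  exact and_congr_right fun hx => h x hx

noncomputable def yv (b m : ℕ) (C : Matrix (Fin m) (Fin m) (ZMod b)) (k : ℕ) : ℕ → ℕ :=
  fun i => if h : i < m then
    ((C.mulVec fun r : Fin m => ((k / b ^ (r:ℕ)) % b : ZMod b)) ⟨i, h⟩).val else 0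

lemma yv_lt (b m : ℕ) [NeZero b] (C : Matrix (Fin m) (Fin m) (ZMod b)) (k : ℕ) :
    ∀ i, yv b m C k i < b := by
  intro i
  unfold yv
  split
  · exact ZMod.val_lt _
  · exact Nat.pos_of_ne_zero (NeZero.ne b)

lemma yv_congr (b m : ℕ) (C C' : Matrix (Fin m) (Fin m) (ZMod b)) (k d : ℕ)
    (h : ∀ (i : Fin m), (i:ℕ) < d → ∀ r, C i r = C' i r) :
    ∀ i < d, yv b m C k i = yv b m C' k i := by
  intro i hi
  unfold yv
  split
  · next h' =>
    congr 1
    have hrow : (fun j => C ⟨i, h'⟩ j) = (fun j => C' ⟨i, h'⟩ j) :=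
      funext fun r => h ⟨i, h'⟩ hi r
    show dotProduct (fun j => C ⟨i, h'⟩ j) _ =
      dotProduct (fun j => C' ⟨i, h'⟩ j) _
    rw [hrow]
  · rfl

lemma digitalPoint_eq (b m : ℕ) (hb : 0 < b) (C : Matrix (Fin m) (Fin m) (ZMod b)) (k : ℕ) :
    digitalPoint b m C k = (Kv b m (yv b m C k) : ℝ) / (b:ℝ) ^ m := by
  have hbR : (0:ℝ) < b := by exact_mod_cast hb
  calc digitalPoint b m C k
      = ∑ i : Fin m, (yv b m C k (i:ℕ) : ℝ) / (b:ℝ) ^ ((i:ℕ)+1) := by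
        rw [digitalPoint]
        refine Finset.sum_congr rfl fun i _ => ?_
        simp only [yv, dif_pos i.isLt, Fin.eta]
    _ = ∑ i ∈ Finset.range m, (yv b m C k i : ℝ) / (b:ℝ) ^ (i+1) :=
        Fin.sum_univ_eq_sum_range (fun i => (yv b m C k i : ℝ) / (b:ℝ) ^ (i+1)) m
    _ = ∑ i ∈ Finset.range m, (yv b m C k i : ℝ) * (b:ℝ) ^ (m-1-i) / (b:ℝ) ^ m := by
        refine Finset.sum_congr rfl fun i hi => ?_
        have him : i < m := Finset.mem_range.mp hi
        have hbe : (b:ℝ) ^ m = (b:ℝ) ^ (i+1) * (b:ℝ) ^ (m - 1 - i) := by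
          rw [← pow_add]
          congr 1
          omega
        have hne : (b:ℝ) ^ (m - 1 - i) ≠ 0 := by positivity
        rw [hbe, mul_div_mul_right _ _ hne]
    _ = (Kv b m (yv b m C k) : ℝ) / (b:ℝ) ^ m := by
        rw [Kv]
        push_cast
        rw [Finset.sum_div]

lemma mem_iff (b m : ℕ) (hb : 1 < b) [NeZero b] {d : ℕ} (hd : d ≤ m)
    (C : Matrix (Fin m) (Fin m) (ZMod b)) (a k : ℕ) :
    ((a : ℝ) / (b:ℝ) ^ d ≤ digitalPoint b m C k ∧
      digitalPoint b m C k < ((a:ℝ)+1) / (b:ℝ)^d)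
      ↔ Kv b d (yv b m C k) = a := by
  rw [digitalPoint_eq b m (by omega) C k]
  have hy := yv_lt b m C k
  set y := yv b m C k with hy'
  set K := Kv b m y with hK'
  have hK : K < b ^ m := Kv_lt b hb m y hy
  have hd0 : (0:ℝ) < (b:ℝ) ^ d := by positivity
  have hm0 : (0:ℝ) < (b:ℝ) ^ m := by positivity
  have hpown : b ^ m = b ^ (m-d) * b ^ d := by rw [← pow_add]; congr 1; omega
  have hpownR : (b:ℝ) ^ m = (b:ℝ) ^ (m-d) * (b:ℝ) ^ d := by
    rw [← pow_add]; congr 1; omega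
  have hc : 0 < b ^ (m - d) := pow_pos (by omega) _
  rw [div_le_div_iff₀ hd0 hm0, div_lt_div_iff₀ hm0 hd0, ← Kv_div b hb hd y hy]
  constructor
  · rintro ⟨h1, h2⟩
    have h1' : a * b ^ m ≤ K * b ^ d := by exact_mod_cast h1
    have h2' : K * b ^ d < (a + 1) * b ^ m := by exact_mod_cast h2
    rw [hpown, ← mul_assoc] at h1' h2'
    have h1'' : a * b ^ (m-d) ≤ K := Nat.le_of_mul_le_mul_right h1' (by positivity)
    have h2'' : K < (a+1) * b ^ (m-d) := Nat.lt_of_mul_lt_mul_right h2'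
    exact Nat.div_eq_of_lt_le h1'' h2''
  · intro h
    have h1'' : a * b ^ (m-d) ≤ K := by
      calc a * b ^ (m-d) = K / b ^ (m-d) * b ^ (m-d) := by rw [h]
        _ ≤ K := Nat.div_mul_le_self _ _
    have h2'' : K < (a+1) * b ^ (m-d) := by
      have hmod : K % b ^ (m-d) < b ^ (m-d) := Nat.mod_lt _ hc
      calc K = b ^ (m-d) * (K / b ^ (m-d)) + K % b ^ (m-d) := (Nat.div_add_mod _ _).symm
        _ = b ^ (m-d) * a + K % b ^ (m-d) := by rw [h]
        _ < b ^ (m-d) * a + b ^ (m-d) := by omega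
        _ = (a+1) * b ^ (m-d) := by ring
    constructor
    · calc (a:ℝ) * (b:ℝ) ^ m = ((a * b ^ (m-d) : ℕ) : ℝ) * (b:ℝ) ^ d := by
            push_cast
            rw [hpownR]
            ring
        _ ≤ (K:ℝ) * (b:ℝ) ^ d := by
            apply mul_le_mul_of_nonneg_right _ (le_of_lt hd0)
            exact_mod_cast h1''
    · calc (K:ℝ) * (b:ℝ) ^ d < (((a+1) * b ^ (m-d) : ℕ) : ℝ) * (b:ℝ) ^ d := by
            apply mul_lt_mul_of_pos_right _ hd0
            exact_mod_cast h2''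
        _ = ((a:ℝ)+1) * (b:ℝ) ^ m := by
            push_cast
            rw [hpownR]
            ring

end RRAux


/-- if `C_1,…,C_s` generate a digital `(t,m,s)`-net over `𝔽_b`, then the row reduced
matrices generate a `(t̃,m,s)`-net with `t̃ = min{m, max{t, w_s}}`. -/
theorem rowReduced_isNet (b m s t : ℕ) (hb : Nat.Prime b) (hm : 1 ≤ m) (hs : 1 ≤ s)
    (ht : t ≤ m) (C : Fin s → Matrix (Fin m) (Fin m) (ZMod b))
    (hnet : isNet b m t (fun k (j : Fin s) => digitalPoint b m (C j) k))
    (w : Fin s → ℕ) (hw1 : w ⟨0, hs⟩ = 0) (hwmono : Monotone w) :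
    isNet b m (min m (max t (w ⟨s - 1, by omega⟩)))
      (fun k (j : Fin s) => digitalPoint b m (rowReduced (C j) (w j)) k) := by
  haveI : NeZero b := ⟨hb.ne_zero⟩
  have hb1 : 1 < b := hb.one_lt
  intro d a ha hsum
  set M := max t (w ⟨s - 1, by omega⟩) with hMdef
  by_cases hMm : m ≤ M
  · -- trivial case: t̃ = m
    rw [min_eq_left hMm] at hsum ⊢
    have hsum0 : ∑ j, d j = 0 := by omega
    have hd0 : ∀ j, d j = 0 := fun j => (Finset.sum_eq_zero_iff.mp hsum0) j (Finset.mem_univ j)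
    have hall : ∀ k ∈ Finset.range (b ^ m), ∀ j : Fin s,
        (a j : ℝ)/(b:ℝ)^(d j) ≤ digitalPoint b m (rowReduced (C j) (w j)) k ∧
        digitalPoint b m (rowReduced (C j) (w j)) k < ((a j : ℝ)+1)/(b:ℝ)^(d j) := by
      intro k _ j
      have ha0 : a j = 0 := by have := ha j; rw [hd0 j] at this; simpa using this
      refine (RRAux.mem_iff b m hb1 (by rw [hd0 j]; omega : d j ≤ m) _ (a j) k).mpr ?_
      simp [RRAux.Kv, hd0 j, ha0]
    have step : ((Finset.range (b ^ m)).filter (fun _ => True)).card = b ^ m := by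
      simp
    refine Eq.trans ?_ step
    exact RRAux.card_filter_congr _ _ fun k hk => iff_true_intro (hall k hk)
  · -- main case: t̃ = M < m
    have hMm2 : M < m := by omega
    rw [min_eq_right (le_of_lt hMm2)] at hsum ⊢
    have htM : t ≤ M := le_max_left _ _
    set u := M - t with hu
    set j0 : Fin s := ⟨0, hs⟩ with hj0
    have hdle : ∀ j, d j ≤ m - M := by
      intro j
      calc d j ≤ ∑ j', d j' :=
            Finset.single_le_sum (fun _ _ => Nat.zero_le _) (Finset.mem_univ j)
        _ = m - M := hsum
    have hwle : ∀ j : Fin s, w j ≤ M := by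
      intro j
      have h1 : w j ≤ w ⟨s-1, by omega⟩ := by
        apply hwmono
        rw [Fin.le_def]
        show (j : ℕ) ≤ s - 1
        have := j.isLt
        omega
      omega
    have hrows : ∀ (j : Fin s) (i : Fin m), (i : ℕ) < d j →
        ∀ r, rowReduced (C j) (w j) i r = C j i r := by
      intro j i hi r
      have h2 : min m (w j) ≤ w j := min_le_right _ _
      have h3 := hdle j
      have h4 := hwle j
      have h1 : (i:ℕ) < m - min m (w j) := by omega
      simp [rowReduced, h1]
    have hyveq : ∀ (j : Fin s) (k : ℕ),
        RRAux.Kv b (d j) (RRAux.yv b m (rowReduced (C j) (w j)) k)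
          = RRAux.Kv b (d j) (RRAux.yv b m (C j) k) :=
      fun j k => RRAux.Kv_congr b (d j)
        (RRAux.yv_congr b m (rowReduced (C j) (w j)) (C j) k (d j) (hrows j))
    have hred : ∀ (j : Fin s) (k : ℕ),
        ((a j : ℝ)/(b:ℝ)^(d j) ≤ digitalPoint b m (rowReduced (C j) (w j)) k ∧
          digitalPoint b m (rowReduced (C j) (w j)) k < ((a j : ℝ)+1)/(b:ℝ)^(d j))
        ↔ RRAux.Kv b (d j) (RRAux.yv b m (C j) k) = a j := by
      intro j k
      rw [RRAux.mem_iff b m hb1 (by have := hdle j; omega) _ (a j) k, hyveq j k]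
    classical
    set d' : Fin s → ℕ := fun j => if j = j0 then d j + u else d j with hd'
    set a' : ℕ → Fin s → ℕ := fun r j => if j = j0 then a j * b ^ u + r else a j with ha'
    have hd'le : ∀ j : Fin s, d' j ≤ m - t := by
      intro j
      have := hdle j
      simp only [hd']
      split <;> omega
    have key : (Finset.range (b ^ m)).filter (fun k => ∀ j,
          (a j : ℝ)/(b:ℝ)^(d j) ≤ digitalPoint b m (rowReduced (C j) (w j)) k ∧
          digitalPoint b m (rowReduced (C j) (w j)) k < ((a j : ℝ)+1)/(b:ℝ)^(d j))
        = (Finset.range (b ^ u)).biUnion (fun r => (Finset.range (b ^ m)).filter (fun k => ∀ j,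
          (a' r j : ℝ)/(b:ℝ)^(d' j) ≤ digitalPoint b m (C j) k ∧
          digitalPoint b m (C j) k < ((a' r j : ℝ)+1)/(b:ℝ)^(d' j))) := by
      ext k
      simp only [Finset.mem_filter, Finset.mem_biUnion, Finset.mem_range]
      constructor
      · rintro ⟨hk, h⟩
        have hH : ∀ j, RRAux.Kv b (d j) (RRAux.yv b m (C j) k) = a j :=
          fun j => (hred j k).mp (h j)
        set He := RRAux.Kv b (d j0 + u) (RRAux.yv b m (C j0) k) with hHe
        have hdiv : He / b ^ u = a j0 := by
          have hdd := RRAux.Kv_div b hb1 (show d j0 ≤ d j0 + u by omega)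
            (RRAux.yv b m (C j0) k) (RRAux.yv_lt b m (C j0) k)
          rw [show d j0 + u - d j0 = u from by omega] at hdd
          rw [← hHe] at hdd
          rw [hdd, hH j0]
        have hmod : He % b ^ u < b ^ u := Nat.mod_lt _ (pow_pos (by omega) u)
        have hHe_eq : He = a j0 * b ^ u + He % b ^ u := by
          conv_lhs => rw [← Nat.div_add_mod He (b ^ u)]
          rw [hdiv, mul_comm]
        refine ⟨He % b ^ u, hmod, hk, ?_⟩
        intro j
        refine (RRAux.mem_iff b m hb1 (by have := hd'le j; omega) _ _ k).mpr ?_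
        by_cases hj : j = j0
        · subst hj
          simp only [hd', ha', if_pos rfl]
          rw [← hHe]
          omega
        · simp only [hd', ha', if_neg hj]
          exact hH j
      · rintro ⟨r, hr, hk, h⟩
        refine ⟨hk, ?_⟩
        intro j
        rw [hred j k]
        have h' : ∀ j, RRAux.Kv b (d' j) (RRAux.yv b m (C j) k) = a' r j :=
          fun j => (RRAux.mem_iff b m hb1 (by have := hd'le j; omega) _ _ k).mp (h j)
        by_cases hj : j = j0
        · subst hj
          have h0 := h' j0
          simp only [hd', ha', if_pos rfl] at h0
          have hdiv := RRAux.Kv_div b hb1 (show d j0 ≤ d j0 + u by omega)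
            (RRAux.yv b m (C j0) k) (RRAux.yv_lt b m (C j0) k)
          rw [show d j0 + u - d j0 = u from by omega] at hdiv
          rw [← hdiv, h0, add_comm, Nat.add_mul_div_right _ _ (pow_pos (by omega) u),
            Nat.div_eq_of_lt hr, zero_add]
        · have h0 := h' j
          simp only [hd', ha', if_neg hj] at h0
          exact h0
    have key2 : ((Finset.range (b ^ m)).filter (fun k => ∀ j,
          (a j : ℝ)/(b:ℝ)^(d j) ≤ digitalPoint b m (rowReduced (C j) (w j)) k ∧
          digitalPoint b m (rowReduced (C j) (w j)) k < ((a j : ℝ)+1)/(b:ℝ)^(d j))).card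
        = b ^ M := by
      rw [key, Finset.card_biUnion]
      · have hcard : ∀ r ∈ Finset.range (b ^ u),
            ((Finset.range (b ^ m)).filter (fun k => ∀ j,
              (a' r j : ℝ)/(b:ℝ)^(d' j) ≤ digitalPoint b m (C j) k ∧
              digitalPoint b m (C j) k < ((a' r j : ℝ)+1)/(b:ℝ)^(d' j))).card = b ^ t := by
          intro r hr
          simp only [Finset.mem_range] at hr
          have h1 : ∀ j, a' r j < b ^ d' j := by
            intro j
            by_cases hj : j = j0
            · subst hj
              simp only [hd', ha', if_pos rfl]
              have haj := ha j0
              calc a j0 * b ^ u + r < a j0 * b ^ u + b ^ u := Nat.add_lt_add_left hr _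
                _ = (a j0 + 1) * b ^ u := by ring
                _ ≤ b ^ (d j0) * b ^ u := Nat.mul_le_mul_right _ (by omega)
                _ = b ^ (d j0 + u) := (pow_add b _ _).symm
            · simp only [hd', ha', if_neg hj]
              exact ha j
          have h2 : ∑ j, d' j = m - t := by
            have hsplit : ∀ j, d' j = d j + (if j = j0 then u else 0) := by
              intro j
              simp only [hd']
              split <;> omega
            rw [Finset.sum_congr rfl (fun j _ => hsplit j), Finset.sum_add_distrib, hsum]
            have hsw : (∑ j : Fin s, if j = j0 then u else 0) = u := by
              simp [Finset.sum_ite_eq']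
            rw [hsw]
            omega
          refine Eq.trans ?_ (hnet d' (a' r) h1 h2)
          exact RRAux.card_filter_congr _ _ fun k hk => Iff.rfl
        rw [Finset.sum_congr rfl hcard, Finset.sum_const, Finset.card_range, smul_eq_mul,
          ← pow_add]
        congr 1
        omega
      · intro r hr r' hr' hne
        simp only [Finset.disjoint_left, Finset.mem_filter, Finset.mem_range]
        rintro k ⟨hk, h1⟩ ⟨_, h2⟩
        have e1 := (RRAux.mem_iff b m hb1 (by have := hd'le j0; omega) (C j0)
          (a' r j0) k).mp (h1 j0)
        have e2 := (RRAux.mem_iff b m hb1 (by have := hd'le j0; omega) (C j0)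
          (a' r' j0) k).mp (h2 j0)
        simp only [ha', if_pos rfl] at e1 e2
        exact hne (Nat.add_left_cancel (e1.symm.trans e2))
    refine Eq.trans ?_ key2
    exact RRAux.card_filter_congr _ _ fun k hk => Iff.rfl
end

section
/- Let b be a prime, let m ≥ 1 and s ≥ 1 be integers, and let C_1, …, C_s be m×m matrices over 𝔽_b. Let u ⊆ {1,…,s} be nonempty with maximal element ū := max(u), and suppose the projection of the digital point set generated by C_1,…,C_s onto the coordinates in u is a digital (t_u, m, |u|)-net over 𝔽_b, where 0 ≤ t_u ≤ m. Let 0 = w_1 ≤ w_2 ≤ ⋯ ≤ w_s be nonnegative integers, let C̃_1, …, C̃_s be the corresponding row reduced matrices, and set t̃_u := min{m, max{w_ū, t_u}}. Then the b^m points in [0,1)^{|u|} generated by the matrices (C̃_j)_{j∈u} via the digital method form a (t̃_u, m, |u|)-net in base b. -/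
open scoped BigOperators

open Finset

lemma digitSum_mod (b k m : ℕ) :
    ∑ r ∈ range m, (k / b ^ r % b) * b ^ r = k % b ^ m := by
  induction m with
  | zero => simp [Nat.mod_one]
  | succ m ih =>
      rw [Finset.sum_range_succ, ih, Nat.mod_pow_succ]
      ring

lemma digitSum_eq (b k m : ℕ) (hk : k < b ^ m) :
    ∑ r ∈ range m, (k / b ^ r % b) * b ^ r = k := by
  rw [digitSum_mod, Nat.mod_eq_of_lt hk]

lemma digitSum_lt (b : ℕ) (hb : 0 < b) (c : ℕ → ℕ) :
    ∀ n, (∀ j, j < n → c j < b) → ∑ j ∈ range n, c j * b ^ j < b ^ n := by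
  intro n
  induction n with
  | zero => simp
  | succ n ih =>
      intro hc
      rw [Finset.sum_range_succ]
      have h1 : ∑ j ∈ range n, c j * b ^ j < b ^ n := ih fun j hj => hc j (hj.trans (Nat.lt_succ_self n))
      have h2 : c n ≤ b - 1 := Nat.le_sub_one_of_lt (hc n (Nat.lt_succ_self n))
      have h3 : c n * b ^ n ≤ (b - 1) * b ^ n := Nat.mul_le_mul_right _ h2
      have h4 : (b - 1) * b ^ n + b ^ n = b ^ (n + 1) := by
        have : (b - 1) * b ^ n + b ^ n = ((b-1) + 1) * b ^ n := by ring
        rw [this, Nat.sub_add_cancel hb, pow_succ, mul_comm]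
      omega

lemma digit_extract (b : ℕ) (hb : 0 < b) :
    ∀ i n (c : ℕ → ℕ), (∀ j, j < n → c j < b) → i < n →
      (∑ j ∈ range n, c j * b ^ j) / b ^ i % b = c i := by
  intro i
  induction i with
  | zero =>
      intro n c hc hn
      obtain ⟨n', rfl⟩ : ∃ n', n = n' + 1 := ⟨n - 1, by omega⟩
      rw [Finset.sum_range_succ']
      simp only [pow_zero, mul_one, pow_succ]
      have : ∑ j ∈ range n', c (j + 1) * (b ^ j * b) = (∑ j ∈ range n', c (j + 1) * b ^ j) * b := by
        rw [Finset.sum_mul]; congr 1; ext j; ring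
      rw [this]
      rw [Nat.div_one, Nat.mul_add_mod', Nat.mod_eq_of_lt (hc 0 (by omega))]
  | succ i ih =>
      intro n c hc hn
      obtain ⟨n', rfl⟩ : ∃ n', n = n' + 1 := ⟨n - 1, by omega⟩
      have hstep : (∑ j ∈ range (n' + 1), c j * b ^ j) / b = ∑ j ∈ range n', c (j + 1) * b ^ j := by
        rw [Finset.sum_range_succ']
        simp only [pow_zero, mul_one, pow_succ]
        have : ∑ j ∈ range n', c (j + 1) * (b ^ j * b) = b * (∑ j ∈ range n', c (j + 1) * b ^ j) := by
          rw [Finset.mul_sum]; congr 1; ext j; ring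
        rw [this, Nat.mul_add_div hb, Nat.div_eq_of_lt (hc 0 (by omega)), Nat.add_zero]
      have : (∑ j ∈ range (n' + 1), c j * b ^ j) / b ^ (i + 1)
          = ((∑ j ∈ range (n' + 1), c j * b ^ j) / b) / b ^ i := by
        rw [Nat.div_div_eq_div_mul, pow_succ, mul_comm]
      rw [this, hstep]
      exact ih n' (fun j => c (j + 1)) (fun j hj => hc (j + 1) (by omega)) (by omega)
open Finset

lemma digitSum_lt' (b : ℕ) (hb : 0 < b) (c : ℕ → ℕ) (n : ℕ) (hc : ∀ j, j < n → c j < b) :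
    ∑ j ∈ range n, c j * b ^ j < b ^ n := by
  induction n with
  | zero => simp
  | succ n ih =>
      rw [Finset.sum_range_succ]
      have h1 : ∑ j ∈ range n, c j * b ^ j < b ^ n :=
        ih fun j hj => hc j (hj.trans (Nat.lt_succ_self n))
      have h2 : c n ≤ b - 1 := Nat.le_sub_one_of_lt (hc n (Nat.lt_succ_self n))
      have h3 : c n * b ^ n ≤ (b - 1) * b ^ n := Nat.mul_le_mul_right _ h2
      have h4 : (b - 1) * b ^ n + b ^ n = b ^ (n + 1) := by
        have : (b - 1) * b ^ n + b ^ n = ((b - 1) + 1) * b ^ n := by ring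
        rw [this, Nat.sub_add_cancel hb, pow_succ, mul_comm]
      omega

lemma frac_le (b : ℕ) (hb : 1 < b) (z : ℕ → ℕ) :
    ∀ n, (∀ j, j < n → z j < b) →
      ∑ j ∈ range n, (z j : ℝ) / (b : ℝ) ^ (j + 1) ≤ 1 - 1 / (b : ℝ) ^ n := by
  have hb0 : (0 : ℝ) < b := by exact_mod_cast Nat.lt_of_lt_of_le Nat.zero_lt_one hb.le
  intro n
  induction n with
  | zero => simp
  | succ n ih =>
      intro hz
      rw [Finset.sum_range_succ]
      have h1 := ih fun j hj => hz j (hj.trans (Nat.lt_succ_self n))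
      have h2 : (z n : ℝ) ≤ (b : ℝ) - 1 := by
        have : z n + 1 ≤ b := hz n (Nat.lt_succ_self n)
        have := (Nat.cast_le (α := ℝ)).2 this
        push_cast at this
        linarith
      have hbn : (0 : ℝ) < (b : ℝ) ^ (n + 1) := pow_pos hb0 _
      have h3 : (z n : ℝ) / (b : ℝ) ^ (n + 1) ≤ ((b : ℝ) - 1) / (b : ℝ) ^ (n + 1) := by
        gcongr
      have h4 : ((b : ℝ) - 1) / (b : ℝ) ^ (n + 1) = 1 / (b : ℝ) ^ n - 1 / (b : ℝ) ^ (n + 1) := by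
        field_simp
        ring
      linarith

lemma interval_iff (b m d a : ℕ) (hb : 1 < b) (hd : d ≤ m) (ha : a < b ^ d)
    (y : ℕ → ℕ) (hy : ∀ i, i < m → y i < b) :
    ((a : ℝ) / (b : ℝ) ^ d ≤ ∑ i ∈ range m, (y i : ℝ) / (b : ℝ) ^ (i + 1)
      ∧ ∑ i ∈ range m, (y i : ℝ) / (b : ℝ) ^ (i + 1) < ((a : ℝ) + 1) / (b : ℝ) ^ d)
    ↔ ∑ i ∈ range d, y i * b ^ (d - 1 - i) = a := by
  have hb0 : (0 : ℝ) < b := by exact_mod_cast Nat.lt_of_lt_of_le Nat.zero_lt_one hb.le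
  have hbd : (0 : ℝ) < (b : ℝ) ^ d := pow_pos hb0 d
  have hbne : (b : ℝ) ≠ 0 := ne_of_gt hb0
  set X : ℝ := ∑ i ∈ range m, (y i : ℝ) / (b : ℝ) ^ (i + 1) with hX
  set A : ℕ := ∑ i ∈ range d, y i * b ^ (d - 1 - i) with hA
  set T : ℝ := ∑ j ∈ range (m - d), (y (d + j) : ℝ) / (b : ℝ) ^ (j + 1) with hT
  have hT0 : 0 ≤ T := by
    apply Finset.sum_nonneg
    intro j _
    positivity
  have hT1 : T < 1 := by
    have := frac_le b hb (fun j => y (d + j)) (m - d)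
      (fun j hj => hy (d + j) (by omega))
    have hp : (0:ℝ) < 1 / (b:ℝ) ^ (m - d) := by positivity
    linarith
  have key : (b : ℝ) ^ d * X = (A : ℝ) + T := by
    have hsplit : X = (∑ i ∈ range d, (y i : ℝ) / (b : ℝ) ^ (i + 1))
        + ∑ i ∈ Ico d m, (y i : ℝ) / (b : ℝ) ^ (i + 1) := by
      rw [hX, range_eq_Ico, ← Finset.sum_Ico_consecutive _ (Nat.zero_le d) hd, ← range_eq_Ico]
    rw [hsplit, mul_add, Finset.mul_sum, Finset.mul_sum]
    congr 1
    · rw [hA, Nat.cast_sum]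
      apply Finset.sum_congr rfl
      intro i hi
      rw [Finset.mem_range] at hi
      have hpow : (b : ℝ) ^ d = (b : ℝ) ^ (d - 1 - i) * (b : ℝ) ^ (i + 1) := by
        rw [← pow_add]
        congr 1
        omega
      have hne : ((b : ℝ) ^ (i + 1)) ≠ 0 := by positivity
      rw [hpow]
      push_cast
      field_simp
    · rw [hT, Finset.sum_Ico_eq_sum_range]
      apply Finset.sum_congr rfl
      intro j _
      have hpow : (b : ℝ) ^ (d + j + 1) = (b : ℝ) ^ d * (b : ℝ) ^ (j + 1) := by
        rw [← pow_add, add_assoc]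
      rw [hpow]
      have hne1 : ((b : ℝ) ^ (j + 1)) ≠ 0 := by positivity
      field_simp
  have hX1 : (a : ℝ) / (b : ℝ) ^ d ≤ X ↔ (a : ℝ) ≤ (A : ℝ) + T := by
    rw [div_le_iff₀ hbd, mul_comm, key]
  have hX2 : X < ((a : ℝ) + 1) / (b : ℝ) ^ d ↔ (A : ℝ) + T < (a : ℝ) + 1 := by
    rw [lt_div_iff₀ hbd, mul_comm, key]
  rw [hX1, hX2]
  constructor
  · rintro ⟨h1, h2⟩
    have c1 : (A : ℝ) < (a : ℝ) + 1 := by linarith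
    have c2 : (a : ℝ) < (A : ℝ) + 1 := by linarith
    have c1' : A < a + 1 := by exact_mod_cast c1
    have c2' : a < A + 1 := by exact_mod_cast c2
    omega
  · intro h
    rw [h]
    constructor <;> linarith
open Finset Module

variable {b m : ℕ} {n : Type*} [Fintype n] [DecidableEq n]

/-- The evaluation linear map. -/
noncomputable def evalMap (b m : ℕ) (hb : b.Prime) (v : n → Fin m → ZMod b) :
    (Fin m → ZMod b) →ₗ[ZMod b] (n → ZMod b) :=
  haveI := Fact.mk hb
  Matrix.mulVecLin (Matrix.of v)

lemma evalMap_apply (hb : b.Prime) (v : n → Fin m → ZMod b) (x : Fin m → ZMod b) (p : n) :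
    evalMap b m hb v x p = ∑ r, v p r * x r := rfl

lemma evalMap_surjective (hb : b.Prime) (v : n → Fin m → ZMod b)
    (hv : LinearIndependent (ZMod b) v) : Function.Surjective (evalMap b m hb v) := by
  haveI := Fact.mk hb
  set ψ := evalMap b m hb v with hψ
  rw [← LinearMap.range_eq_top]
  by_contra h
  obtain ⟨f, hf0, hmap⟩ :=
    Submodule.exists_dual_map_eq_bot_of_lt_top (lt_top_iff_ne_top.mpr h) inferInstance
  set g : n → ZMod b := fun p => f (Pi.single p 1) with hg
  have hf_on : ∀ y ∈ LinearMap.range ψ, f y = 0 := by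
    intro y hy
    have : f y ∈ Submodule.map f (LinearMap.range ψ) := Submodule.mem_map_of_mem hy
    rwa [hmap, Submodule.mem_bot] at this
  have hfz : ∀ z : n → ZMod b, f z = ∑ p, z p * g p := by
    intro z
    conv_lhs => rw [pi_eq_sum_univ z]
    rw [map_sum]
    apply Finset.sum_congr rfl
    intro p _
    rw [map_smul, smul_eq_mul]
    congr 1
    congr 1
    funext j
    simp only [Pi.single_apply]
    by_cases hpj : p = j <;> simp [hpj, eq_comm]
  have hva : ∀ r : Fin m, ∑ p, g p * v p r = 0 := by
    intro r
    have h1 : f (ψ (Pi.single r 1)) = 0 := hf_on _ ⟨_, rfl⟩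
    rw [hfz] at h1
    have h2 : ∀ p : n, ψ (Pi.single r 1) p = v p r := by
      intro p
      rw [hψ, evalMap_apply hb]
      simp [Pi.single_apply, Finset.sum_ite_eq]
    calc ∑ p, g p * v p r = ∑ p, ψ (Pi.single r 1) p * g p := by
          apply Finset.sum_congr rfl; intro p _; rw [h2 p, mul_comm]
      _ = 0 := h1
  have hgz : g = 0 := by
    by_contra hgne
    obtain ⟨p0, hp0⟩ := Function.ne_iff.mp hgne
    have := Fintype.linearIndependent_iff.mp hv g ?_ p0
    · exact hp0 this
    · funext r
      have := hva r
      simpa [Finset.sum_apply, smul_eq_mul] using this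
  exact hf0 (LinearMap.ext fun z => by rw [hfz, hgz]; simp)

lemma card_solutions (hb : b.Prime) (v : n → Fin m → ZMod b)
    (hv : LinearIndependent (ZMod b) v) (c : n → ZMod b) :
    Nat.card {x : Fin m → ZMod b // ∀ p, ∑ r, v p r * x r = c p}
        = b ^ (m - Fintype.card n) ∧ Fintype.card n ≤ m := by
  haveI := Fact.mk hb
  haveI : NeZero b := ⟨hb.ne_zero⟩
  set ψ := evalMap b m hb v with hψ
  have hsurj := evalMap_surjective hb v hv
  have hrank : finrank (ZMod b) (LinearMap.range ψ) + finrank (ZMod b) (LinearMap.ker ψ)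
      = finrank (ZMod b) (Fin m → ZMod b) := LinearMap.finrank_range_add_finrank_ker ψ
  rw [LinearMap.range_eq_top.mpr hsurj] at hrank
  have hfin1 : finrank (ZMod b) (Fin m → ZMod b) = m := by
    rw [Module.finrank_pi]; simp
  have hfin2 : finrank (ZMod b) (⊤ : Submodule (ZMod b) (n → ZMod b)) = Fintype.card n := by
    rw [finrank_top, Module.finrank_pi]
  rw [hfin1, hfin2] at hrank
  have hle : Fintype.card n ≤ m := by omega
  have hker : finrank (ZMod b) (LinearMap.ker ψ) = m - Fintype.card n := by omega
  obtain ⟨x0, hx0⟩ := hsurj c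
  have hcardker : Nat.card (LinearMap.ker ψ) = b ^ (m - Fintype.card n) := by
    haveI : Fintype (LinearMap.ker ψ) := Fintype.ofFinite _
    rw [Nat.card_eq_fintype_card, card_eq_pow_finrank (K := ZMod b), ZMod.card, hker]
  refine ⟨?_, hle⟩
  rw [← hcardker]
  apply Nat.card_congr
  refine Equiv.trans (Equiv.subtypeEquivRight (q := fun x => ψ x = c) ?_) ?_
  · intro x
    show _ ↔ ψ x = c
    rw [funext_iff]
    constructor <;> intro h p <;> have := h p
    · rw [hψ, evalMap_apply hb]; exact this
    · rw [hψ, evalMap_apply hb] at this; exact this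
  · exact
    { toFun := fun x => ⟨x.1 - x0, by
        rw [LinearMap.mem_ker, map_sub, x.2, hx0, sub_self]⟩
      invFun := fun y => ⟨x0 + y.1, by
        have hy := y.2
        rw [LinearMap.mem_ker] at hy
        rw [map_add, hy, hx0, add_zero]⟩
      left_inv := fun x => by ext; simp
      right_inv := fun y => by ext; simp }

lemma card_solutions_dep (hb : b.Prime) (v : n → Fin m → ZMod b)
    (hv : ¬ LinearIndependent (ZMod b) v) (hnm : Fintype.card n ≤ m) :
    b ^ (m - Fintype.card n + 1)
      ≤ Nat.card {x : Fin m → ZMod b // ∀ p, ∑ r, v p r * x r = (0 : ZMod b)} := by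
  haveI := Fact.mk hb
  haveI : NeZero b := ⟨hb.ne_zero⟩
  set ψ := evalMap b m hb v with hψ
  obtain ⟨g, hg, p0, hp0⟩ := Fintype.not_linearIndependent_iff.mp hv
  set flam : (n → ZMod b) →ₗ[ZMod b] ZMod b :=
    ∑ p : n, g p • (LinearMap.proj p : (n → ZMod b) →ₗ[ZMod b] ZMod b) with hflam
  have hflam_apply : ∀ z : n → ZMod b, flam z = ∑ p, g p * z p := by
    intro z
    rw [hflam]
    simp [LinearMap.sum_apply, smul_eq_mul]
  have hva : ∀ r : Fin m, ∑ p, g p * v p r = 0 := by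
    intro r
    have := congrFun hg r
    simpa [Finset.sum_apply, smul_eq_mul] using this
  have hcomp : ∀ x, flam (ψ x) = 0 := by
    intro x
    rw [hflam_apply]
    calc ∑ p, g p * ψ x p = ∑ p, ∑ r, g p * (v p r * x r) := by
          apply Finset.sum_congr rfl; intro p _
          rw [hψ, evalMap_apply hb, Finset.mul_sum]
      _ = ∑ r, ∑ p, g p * (v p r * x r) := Finset.sum_comm
      _ = ∑ r : Fin m, (∑ p, g p * v p r) * x r := by
          apply Finset.sum_congr rfl; intro r _
          rw [Finset.sum_mul]
          apply Finset.sum_congr rfl; intro p _; ring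
      _ = 0 := by simp [hva]
  have hrange_le : LinearMap.range ψ ≤ LinearMap.ker flam := by
    rintro y ⟨x, rfl⟩
    exact hcomp x
  have hflam_surj : Function.Surjective flam := by
    intro cc
    refine ⟨(cc / g p0) • (Pi.single p0 1 : n → ZMod b), ?_⟩
    rw [map_smul, hflam_apply]
    simp [Pi.single_apply, Finset.sum_ite_eq, smul_eq_mul]
    field_simp
  have hrank2 : finrank (ZMod b) (LinearMap.range flam) + finrank (ZMod b) (LinearMap.ker flam)
      = finrank (ZMod b) (n → ZMod b) := LinearMap.finrank_range_add_finrank_ker flam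
  rw [LinearMap.range_eq_top.mpr hflam_surj, finrank_top, Module.finrank_self,
    Module.finrank_pi] at hrank2
  have hkerflam : finrank (ZMod b) (LinearMap.ker flam) = Fintype.card n - 1 := by omega
  have hrangeψ : finrank (ZMod b) (LinearMap.range ψ) ≤ Fintype.card n - 1 := by
    rw [← hkerflam]
    exact Submodule.finrank_mono hrange_le
  have hrank1 : finrank (ZMod b) (LinearMap.range ψ) + finrank (ZMod b) (LinearMap.ker ψ)
      = finrank (ZMod b) (Fin m → ZMod b) := LinearMap.finrank_range_add_finrank_ker ψ
  have hfin1 : finrank (ZMod b) (Fin m → ZMod b) = m := by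
    rw [Module.finrank_pi]; simp
  rw [hfin1] at hrank1
  have hcard_n_pos : 1 ≤ Fintype.card n := by
    rcases isEmpty_or_nonempty n with h | h
    · exact absurd hp0 (by simp [eq_iff_true_of_subsingleton]; exact (IsEmpty.elim h p0))
    · exact Fintype.card_pos
  have hkerψ : m - Fintype.card n + 1 ≤ finrank (ZMod b) (LinearMap.ker ψ) := by omega
  have hcardker : Nat.card (LinearMap.ker ψ) = b ^ finrank (ZMod b) (LinearMap.ker ψ) := by
    haveI : Fintype (LinearMap.ker ψ) := Fintype.ofFinite _
    rw [Nat.card_eq_fintype_card, card_eq_pow_finrank (K := ZMod b), ZMod.card]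
  have hEquiv : Nat.card {x : Fin m → ZMod b // ∀ p, ∑ r, v p r * x r = (0 : ZMod b)}
      = Nat.card (LinearMap.ker ψ) := by
    apply Nat.card_congr
    apply Equiv.subtypeEquivRight
    intro x
    rw [LinearMap.mem_ker, funext_iff]
    constructor <;> intro h p <;> have := h p
    · rw [hψ, evalMap_apply hb]; simpa using this
    · rw [hψ, evalMap_apply hb] at this; simpa using this
  rw [hEquiv, hcardker]
  exact Nat.pow_le_pow_right hb.pos hkerψ


lemma digits_eq_iff (b d a : ℕ) (hb : 1 < b) (ha : a < b ^ d) (Y : ℕ → ℕ)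
    (hY : ∀ i, i < d → Y i < b) :
    (∑ i ∈ range d, Y i * b ^ (d - 1 - i) = a)
      ↔ ∀ i, i < d → Y i = a / b ^ (d - 1 - i) % b := by
  have hb0 : 0 < b := by omega
  have hrefl : ∑ i ∈ range d, Y i * b ^ (d - 1 - i)
      = ∑ j ∈ range d, Y (d - 1 - j) * b ^ j := by
    rw [← Finset.sum_range_reflect (fun j => Y (d - 1 - j) * b ^ j) d]
    apply Finset.sum_congr rfl
    intro i hi
    rw [Finset.mem_range] at hi
    congr 2
    omega
  constructor
  · intro h i hi
    have h2 : ∑ j ∈ range d, Y (d - 1 - j) * b ^ j = a := by rw [← hrefl]; exact h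
    have h3 := digit_extract b hb0 (d - 1 - i) d (fun j => Y (d - 1 - j))
        (fun j hj => hY _ (by omega)) (by omega)
    rw [h2] at h3
    have hii : d - 1 - (d - 1 - i) = i := by omega
    have h4 : Y (d - 1 - (d - 1 - i)) = a / b ^ (d - 1 - i) % b := h3.symm
    rw [hii] at h4
    omega
  · intro h
    rw [hrefl]
    have he : ∀ j ∈ range d, Y (d - 1 - j) * b ^ j = (a / b ^ j % b) * b ^ j := by
      intro j hj
      rw [Finset.mem_range] at hj
      rw [h (d - 1 - j) (by omega), show d - 1 - (d - 1 - j) = j from by omega]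
    rw [Finset.sum_congr rfl he, digitSum_mod, Nat.mod_eq_of_lt ha]

lemma card_filter_lt (m c : ℕ) (hc : c ≤ m) :
    (Finset.univ.filter fun i : Fin m => (i : ℕ) < c).card = c := by
  have : (Finset.univ.filter fun i : Fin m => (i : ℕ) < c)
      = (Finset.univ : Finset (Fin c)).map (Fin.castLEEmb hc) := by
    ext i
    simp only [Finset.mem_filter, Finset.mem_univ, true_and, Finset.mem_map,
      Fin.castLEEmb, Function.Embedding.coeFn_mk]
    constructor
    · intro h
      exact ⟨⟨(i : ℕ), h⟩, rfl⟩
    · rintro ⟨j, rfl⟩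
      exact j.2
  rw [this, Finset.card_map, Finset.card_univ, Fintype.card_fin]

lemma card_index {ι : Type*} [Fintype ι] (m : ℕ) (d : ι → ℕ) (hd : ∀ j, d j ≤ m) :
    Fintype.card {p : ι × Fin m // ((p.2 : ℕ) < d p.1)} = ∑ j, d j := by
  classical
  rw [Fintype.card_subtype, Finset.card_filter, Fintype.sum_prod_type]
  apply Finset.sum_congr rfl
  intro j _
  rw [← Finset.card_filter]
  exact card_filter_lt m (d j) (hd j)


open Classical in
lemma bridge (b m : ℕ) (hb : 1 < b) {ι : Type*} [Fintype ι]
    (M : ι → Matrix (Fin m) (Fin m) (ZMod b)) (d a : ι → ℕ)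
    (hd : ∀ j, d j ≤ m) (ha : ∀ j, a j < b ^ d j) :
    ((Finset.range (b ^ m)).filter fun k =>
        ∀ j, (a j : ℝ) / (b : ℝ) ^ d j ≤ digitalPoint b m (M j) k ∧
          digitalPoint b m (M j) k < ((a j : ℝ) + 1) / (b : ℝ) ^ d j).card
    = Nat.card {x : Fin m → ZMod b //
        ∀ p : {p : ι × Fin m // ((p.2 : ℕ) < d p.1)},
          ∑ r, M p.1.1 p.1.2 r * x r
            = ((a p.1.1 / b ^ (d p.1.1 - 1 - (p.1.2 : ℕ)) % b : ℕ) : ZMod b)} := by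
  have hb0 : 0 < b := by omega
  haveI : NeZero b := ⟨by omega⟩
  set Q : (Fin m → ZMod b) → Prop := fun x =>
    ∀ p : {p : ι × Fin m // ((p.2 : ℕ) < d p.1)},
      ∑ r, M p.1.1 p.1.2 r * x r
        = ((a p.1.1 / b ^ (d p.1.1 - 1 - (p.1.2 : ℕ)) % b : ℕ) : ZMod b) with hQdef
  -- the digit vector of k
  set vec : ℕ → (Fin m → ZMod b) :=
    fun k r => ((k / b ^ (r : ℕ) % b : ℕ) : ZMod b) with hvec
  -- the natural digits of the j-th coordinate of the k-th point
  set Y : Matrix (Fin m) (Fin m) (ZMod b) → ℕ → ℕ → ℕ :=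
    fun N k i => if h : i < m then ((N.mulVec (vec k)) ⟨i, h⟩).val else 0 with hYdef
  have hdp : ∀ N k, digitalPoint b m N k
      = ∑ i ∈ range m, (Y N k i : ℝ) / (b : ℝ) ^ (i + 1) := by
    intro N k
    rw [digitalPoint, ← Fin.sum_univ_eq_sum_range (fun i => (Y N k i : ℝ) / (b : ℝ) ^ (i + 1)) m]
    apply Finset.sum_congr rfl
    intro i _
    simp [hYdef, i.isLt, hvec]
  have hYlt : ∀ N k i, i < m → Y N k i < b := by
    intro N k i hi
    simp only [hYdef, dif_pos hi]
    exact ZMod.val_lt _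
  -- the key pointwise equivalence
  have hcond : ∀ k,
      (∀ j, (a j : ℝ) / (b : ℝ) ^ d j ≤ digitalPoint b m (M j) k ∧
          digitalPoint b m (M j) k < ((a j : ℝ) + 1) / (b : ℝ) ^ d j)
      ↔ Q (vec k) := by
    intro k
    have hstep : ∀ j : ι,
        ((a j : ℝ) / (b : ℝ) ^ d j ≤ digitalPoint b m (M j) k ∧
          digitalPoint b m (M j) k < ((a j : ℝ) + 1) / (b : ℝ) ^ d j)
        ↔ ∀ i : Fin m, (i : ℕ) < d j →
            (M j).mulVec (vec k) i
              = ((a j / b ^ (d j - 1 - (i : ℕ)) % b : ℕ) : ZMod b) := by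
      intro j
      rw [hdp]
      rw [interval_iff b m (d j) (a j) hb (hd j) (ha j) (Y (M j) k)
        (fun i hi => hYlt (M j) k i hi)]
      rw [digits_eq_iff b (d j) (a j) hb (ha j) (Y (M j) k)
        (fun i hi => hYlt (M j) k i (lt_of_lt_of_le hi (hd j)))]
      constructor
      · intro h i hi
        have := h (i : ℕ) hi
        simp only [hYdef, dif_pos i.isLt] at this
        have hcast : ((M j).mulVec (vec k) ⟨(i : ℕ), i.isLt⟩ : ZMod b)
            = ((a j / b ^ (d j - 1 - (i : ℕ)) % b : ℕ) : ZMod b) := by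
          rw [← this]
          rw [ZMod.natCast_val, ZMod.cast_id]
        simpa using hcast
      · intro h i hi
        have him : i < m := lt_of_lt_of_le hi (hd j)
        have := h ⟨i, him⟩ hi
        simp only [hYdef, dif_pos him]
        rw [this, ZMod.val_cast_of_lt (Nat.mod_lt _ hb0)]
    constructor
    · intro h p
      exact (hstep p.1.1).mp (h p.1.1) p.1.2 p.2
    · intro h j
      rw [hstep j]
      intro i hi
      exact h ⟨(j, i), hi⟩
  -- now count via the bijection k ↦ vec k
  have hQcard : Nat.card {x : Fin m → ZMod b // Q x}
      = (Finset.univ.filter Q).card := by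
    rw [Nat.card_eq_fintype_card, Fintype.card_subtype]
  rw [hQcard]
  set G : (Fin m → ZMod b) → ℕ :=
    fun x => ∑ i ∈ range m, (if h : i < m then (x ⟨i, h⟩).val else 0) * b ^ i with hG
  have hGlt : ∀ x, G x < b ^ m := by
    intro x
    apply digitSum_lt' b hb0 _ m
    intro i hi
    simp only [dif_pos hi]
    exact ZMod.val_lt _
  have hGvec : ∀ x, vec (G x) = x := by
    intro x
    funext r
    have hex := digit_extract b hb0 (r : ℕ) m
      (fun i => if h : i < m then (x ⟨i, h⟩).val else 0)
      (fun i hi => by simp only [dif_pos hi]; exact ZMod.val_lt _) r.isLt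
    simp only [hvec, hG]
    rw [hex]
    simp only [dif_pos r.isLt]
    rw [ZMod.natCast_val, ZMod.cast_id]
  have hvecG : ∀ k, k < b ^ m → G (vec k) = k := by
    intro k hk
    simp only [hG, hvec]
    have he : ∀ i ∈ range m,
        (if h : i < m then (((k / b ^ (i : ℕ) % b : ℕ) : ZMod b)).val else 0) * b ^ i
          = (k / b ^ i % b) * b ^ i := by
      intro i hi
      rw [Finset.mem_range] at hi
      rw [dif_pos hi, ZMod.val_cast_of_lt (Nat.mod_lt _ hb0)]
    rw [Finset.sum_congr rfl he, digitSum_eq b k m hk]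
  apply Finset.card_bij' (fun k _ => vec k) (fun x _ => G x)
  · intro k hk
    rw [Finset.mem_filter] at hk
    rw [Finset.mem_filter]
    exact ⟨Finset.mem_univ _, (hcond k).mp hk.2⟩
  · intro x hx
    rw [Finset.mem_filter] at hx
    rw [Finset.mem_filter, Finset.mem_range]
    refine ⟨hGlt x, ?_⟩
    rw [hcond (G x), hGvec x]
    exact hx.2
  · intro k hk
    rw [Finset.mem_filter, Finset.mem_range] at hk
    exact hvecG k hk.1
  · intro x _
    exact hGvec x

lemma rowsLinIndep_mono {b m : ℕ} {ι : Type*} (C : ι → Matrix (Fin m) (Fin m) (ZMod b))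
    (d d' : ι → ℕ) (h : ∀ j, d j ≤ d' j) (hind : rowsLinIndep b m C d') :
    rowsLinIndep b m C d := by
  have hinj : Function.Injective
      (fun p : {p : ι × Fin m // ((p.2 : ℕ) < d p.1)} =>
        (⟨p.1, lt_of_lt_of_le p.2 (h p.1.1)⟩ : {p : ι × Fin m // ((p.2 : ℕ) < d' p.1)})) := by
    intro x y hxy
    rw [Subtype.ext_iff] at hxy ⊢
    exact hxy
  exact hind.comp _ hinj

lemma extend_d {ι : Type*} [Fintype ι] [Nonempty ι] (m : ℕ) :
    ∀ (n : ℕ) (d : ι → ℕ), (∀ j, d j ≤ m) → ∑ j, d j + n ≤ m →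
      ∃ d' : ι → ℕ, (∀ j, d j ≤ d' j) ∧ (∀ j, d' j ≤ m) ∧ ∑ j, d' j = ∑ j, d j + n := by
  intro n
  induction n with
  | zero => exact fun d hd _ => ⟨d, fun j => le_rfl, hd, by omega⟩
  | succ n ih =>
      intro d hd hsum
      have hex : ∃ j0 : ι, d j0 < m := by
        by_contra hno
        push_neg at hno
        have hall : ∀ j, d j = m := fun j => le_antisymm (hd j) (hno j)
        have hcard : ∑ j, d j = Fintype.card ι * m := by
          simp [hall, Finset.sum_const, Finset.card_univ]
        have h1 : 1 ≤ Fintype.card ι := Fintype.card_pos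
        have h2 : m ≤ Fintype.card ι * m := Nat.le_mul_of_pos_left m h1
        omega
      obtain ⟨j0, hj0⟩ := hex
      classical
      set d1 := Function.update d j0 (d j0 + 1) with hd1def
      have hdd1 : ∀ j, d j ≤ d1 j := by
        intro j
        rcases eq_or_ne j j0 with h | h
        · subst h; simp [hd1def]
        · simp [hd1def, Function.update_apply, h]
      have hsum1 : ∑ j, d1 j = ∑ j, d j + 1 := by
        rw [hd1def, Finset.sum_update_of_mem (Finset.mem_univ j0), ← Finset.erase_eq]
        have := Finset.add_sum_erase Finset.univ d (Finset.mem_univ j0)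
        omega
      have hd1m : ∀ j, d1 j ≤ m := by
        intro j
        rcases eq_or_ne j j0 with h | h
        · subst h; simp [hd1def]; omega
        · simp [hd1def, Function.update_apply, h]; exact hd j
      obtain ⟨d', h1, h2, h3⟩ := ih d1 hd1m (by omega)
      exact ⟨d', fun j => le_trans (hdd1 j) (h1 j), h2, by omega⟩

lemma net_implies_indep (b m tu : ℕ) (hb : Nat.Prime b) {ι : Type*} [Fintype ι]
    [DecidableEq ι]
    (M : ι → Matrix (Fin m) (Fin m) (ZMod b)) (htu : tu ≤ m)
    (hnet : isNet b m tu (fun k j => digitalPoint b m (M j) k))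
    (dv : ι → ℕ) (hdv : ∑ j, dv j = m - tu) (hdvm : ∀ j, dv j ≤ m) :
    rowsLinIndep b m M dv := by
  by_contra hdep
  have hnm : Fintype.card {p : ι × Fin m // ((p.2 : ℕ) < dv p.1)} ≤ m := by
    rw [card_index m dv hdvm, hdv]
    omega
  have key : Nat.card {x : Fin m → ZMod b //
      ∀ p : {p : ι × Fin m // ((p.2 : ℕ) < dv p.1)},
        ∑ r, M p.1.1 p.1.2 r * x r
          = (((0 : ι → ℕ) p.1.1 / b ^ (dv p.1.1 - 1 - (p.1.2 : ℕ)) % b : ℕ) : ZMod b)}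
      = b ^ tu := by
    rw [← bridge b m hb.one_lt M dv 0 hdvm (fun j => pow_pos hb.pos _)]
    exact hnet dv 0 (fun j => pow_pos hb.pos _) hdv
  have key0 : Nat.card {x : Fin m → ZMod b //
      ∀ p : {p : ι × Fin m // ((p.2 : ℕ) < dv p.1)},
        ∑ r, M p.1.1 p.1.2 r * x r = (0 : ZMod b)} = b ^ tu := by
    rw [← key]
    apply Nat.card_congr
    apply Equiv.subtypeEquivRight
    intro x
    constructor <;> intro h p <;> have := h p <;> simpa using this
  have hlb := card_solutions_dep hb
    (fun p : {p : ι × Fin m // ((p.2 : ℕ) < dv p.1)} => M p.1.1 p.1.2) hdep hnm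
  rw [card_index m dv hdvm, hdv] at hlb
  have hlb' : b ^ (m - (m - tu) + 1) ≤ Nat.card {x : Fin m → ZMod b //
      ∀ p : {p : ι × Fin m // ((p.2 : ℕ) < dv p.1)},
        ∑ r, M p.1.1 p.1.2 r * x r = (0 : ZMod b)} := hlb
  have hsub : m - (m - tu) = tu := Nat.sub_sub_self htu
  rw [key0, hsub] at hlb'
  have hpow : b ^ tu < b ^ (tu + 1) :=
    Nat.pow_lt_pow_right hb.one_lt (Nat.lt_succ_self tu)
  exact absurd hlb' (not_le.mpr hpow)

/-- if the projection of the digital net generated by `C_1,…,C_s` onto the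
coordinates in `u` is a digital `(t_u,m,|u|)`-net, then the points generated by the row reduced
matrices `(C̃_j)_{j∈u}` form a `(t̃_u,m,|u|)`-net with `t̃_u = min{m, max{w_ū, t_u}}`. -/
theorem rowReduced_proj_isNet (b m s : ℕ) (hb : Nat.Prime b) (hm : 1 ≤ m) (hs : 1 ≤ s)
    (C : Fin s → Matrix (Fin m) (Fin m) (ZMod b))
    (u : Finset (Fin s)) (hu : u.Nonempty) (tu : ℕ) (htu : tu ≤ m)
    (hnet : isNet b m tu (fun k (j : ↥u) => digitalPoint b m (C j) k))
    (w : Fin s → ℕ) (hw1 : w ⟨0, hs⟩ = 0) (hwmono : Monotone w) :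
    isNet b m (min m (max (w (u.max' hu)) tu))
      (fun k (j : ↥u) => digitalPoint b m (rowReduced (C j) (w j)) k) := by
  classical
  intro d a ha hd
  haveI : Nonempty ↥u := ⟨⟨hu.choose, hu.choose_spec⟩⟩
  set t : ℕ := min m (max (w (u.max' hu)) tu) with htdef
  have htm : t ≤ m := min_le_left _ _
  have htut : tu ≤ t := by
    have : tu ≤ max (w (u.max' hu)) tu := le_max_right _ _
    omega
  have hdj_le : ∀ j : ↥u, d j ≤ m - t := by
    intro j
    have := Finset.single_le_sum (f := d) (fun i _ => Nat.zero_le _) (Finset.mem_univ j)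
    omega
  have hdj_le_m : ∀ j : ↥u, d j ≤ m := fun j => le_trans (hdj_le j) (Nat.sub_le _ _)
  have hwle : ∀ j : ↥u, w (j : Fin s) ≤ w (u.max' hu) :=
    fun j => hwmono (u.le_max' _ j.2)
  have hdj_red : ∀ j : ↥u, d j ≤ m - min m (w (j : Fin s)) := by
    intro j
    have h1 := hdj_le j
    have h2 := hwle j
    omega
  -- linear independence of the original rows
  have hsum_le : ∑ j : ↥u, d j + (t - tu) ≤ m := by omega
  obtain ⟨d', hdd', hd'm, hd'sum⟩ := extend_d m (t - tu) d hdj_le_m hsum_le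
  have hd'sum' : ∑ j : ↥u, d' j = m - tu := by omega
  have hindep' : rowsLinIndep b m (fun j : ↥u => C j) d' :=
    net_implies_indep b m tu hb (fun j : ↥u => C (j : Fin s)) htu hnet d' hd'sum' hd'm
  have hindep : rowsLinIndep b m (fun j : ↥u => C j) d :=
    rowsLinIndep_mono _ d d' hdd' hindep'
  -- the reduced rows coincide with the original rows on the index set
  have hrows : ∀ p : {p : ↥u × Fin m // ((p.2 : ℕ) < d p.1)},
      (fun p : {p : ↥u × Fin m // ((p.2 : ℕ) < d p.1)} =>
        rowReduced (C (p.1.1 : Fin s)) (w (p.1.1 : Fin s)) p.1.2) p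
      = (fun p : {p : ↥u × Fin m // ((p.2 : ℕ) < d p.1)} => C (p.1.1 : Fin s) p.1.2) p := by
    intro p
    funext r
    have hlt : ((p.1.2 : ℕ)) < m - min m (w (p.1.1 : Fin s)) :=
      lt_of_lt_of_le p.2 (hdj_red p.1.1)
    simp only [rowReduced, Matrix.of_apply, if_pos hlt]
  have hindep_red : rowsLinIndep b m
      (fun j : ↥u => rowReduced (C (j : Fin s)) (w (j : Fin s))) d := by
    unfold rowsLinIndep at hindep ⊢
    rw [funext hrows]
    exact hindep
  -- now count
  have hbridge := bridge b m hb.one_lt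
    (fun j : ↥u => rowReduced (C (j : Fin s)) (w (j : Fin s))) d a hdj_le_m ha
  have hcount := (card_solutions hb
    (fun p : {p : ↥u × Fin m // ((p.2 : ℕ) < d p.1)} =>
      rowReduced (C (p.1.1 : Fin s)) (w (p.1.1 : Fin s)) p.1.2) hindep_red
    (fun p => ((a p.1.1 / b ^ (d p.1.1 - 1 - (p.1.2 : ℕ)) % b : ℕ) : ZMod b))).1
  rw [card_index m d hdj_le_m, hd] at hcount
  have hfinal : Nat.card {x : Fin m → ZMod b //
      ∀ p : {p : ↥u × Fin m // ((p.2 : ℕ) < d p.1)},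
        ∑ r, rowReduced (C (p.1.1 : Fin s)) (w (p.1.1 : Fin s)) p.1.2 r * x r
          = ((a p.1.1 / b ^ (d p.1.1 - 1 - (p.1.2 : ℕ)) % b : ℕ) : ZMod b)}
      = b ^ t := by
    have h5 : m - (m - t) = t := Nat.sub_sub_self htm
    exact hcount.trans (by rw [h5])
  exact hbridge.trans hfinal
end

section
/- Let b be a prime, let m ≥ 1, s ≥ 1 and t be integers with 0 ≤ t ≤ m, and let C_1, …, C_s be infinite matrices over 𝔽_b generating a digital (t,s)-sequence, in the sense that for every integer m' with max(t,1) ≤ m' ≤ m, the upper-left m'×m' submatrices satisfy ρ_{m'}(C_1^{(m')},…,C_s^{(m')}) ≥ m' − t. Let 0 = w_1^r ≤ ⋯ ≤ w_s^r and 0 = w_1^c ≤ ⋯ ≤ w_s^c be nonnegative integers and let C̃_1, …, C̃_s be the m×m matrices obtained from C_1^{(m)},…,C_s^{(m)} by setting, for each j, the last min(m, w_j^r) rows and the last min(m, w_j^c) columns to zero. Then ρ_m(C̃_1,…,C̃_s) ≥ max{0, m − max{w_s^c + t, w_s^r}}. -/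
open scoped BigOperators

lemma zero_mem_rho_set (b m : ℕ) {ι : Type*} [Fintype ι]
    (C : ι → Matrix (Fin m) (Fin m) (ZMod b)) :
    (0 : ℕ) ∈ {d | d ≤ m ∧ ∀ dv : ι → ℕ, (∑ j, dv j) = d → rowsLinIndep b m C dv} := by
  refine ⟨Nat.zero_le _, fun dv hdv => ?_⟩
  have hz : ∀ j, dv j = 0 := by
    intro j
    exact (Finset.sum_eq_zero_iff.1 hdv) j (Finset.mem_univ j)
  haveI : IsEmpty {p : ι × Fin m // (p.2 : ℕ) < dv p.1} :=
    ⟨fun p => by have := p.2; rw [hz p.1.1] at this; omega⟩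
  exact linearIndependent_empty_type

lemma rho_colRowReduced'_aux (b m s t : ℕ) (hm : 1 ≤ m) (hs : 1 ≤ s) (ht : t ≤ m)
    (C : Fin s → Matrix ℕ ℕ (ZMod b))
    (hseq : ∀ m', max t 1 ≤ m' → m' ≤ m →
      m' - t ≤ rho b m' (fun j => upperLeft (C j) m'))
    (wr wc : Fin s → ℕ) (wrs wcs : ℕ)
    (hwr : ∀ j, wr j ≤ wrs) (hwc : ∀ j, wc j ≤ wcs) :
    m - max (wcs + t) wrs ≤
      rho b m (fun j => colRowReduced' (upperLeft (C j) m) (wr j) (wc j)) := by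
  by_cases hL : m ≤ max (wcs + t) wrs
  · simp [Nat.sub_eq_zero_of_le hL]
  push_neg at hL
  set D := m - max (wcs + t) wrs with hD
  set m' := m - wcs with hm'
  have hm'le : m' ≤ m := Nat.sub_le _ _
  have ht1 : max t 1 ≤ m' := by omega
  have hrho := hseq m' ht1 hm'le
  have hNmem : rho b m' (fun j => upperLeft (C j) m') ∈
      {d | d ≤ m' ∧ ∀ dv : Fin s → ℕ, (∑ j, dv j) = d →
        rowsLinIndep b m' (fun j => upperLeft (C j) m') dv} :=
    Nat.sSup_mem ⟨0, zero_mem_rho_set b m' _⟩ ⟨m', fun x hx => hx.1⟩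
  obtain ⟨hNle, hNli⟩ := hNmem
  set N := rho b m' (fun j => upperLeft (C j) m') with hN
  have hDN : D ≤ N := by omega
  have hmem : D ∈ {d | d ≤ m ∧ ∀ dv : Fin s → ℕ, (∑ j, dv j) = d →
      rowsLinIndep b m (fun j => colRowReduced' (upperLeft (C j) m) (wr j) (wc j)) dv} := by
    refine ⟨by omega, fun dv hsum => ?_⟩
    have hdvle : ∀ j, dv j ≤ D := fun j =>
      hsum ▸ Finset.single_le_sum (fun _ _ => Nat.zero_le _) (Finset.mem_univ j)
    classical
    set j0 : Fin s := ⟨0, hs⟩ with hj0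
    set dv' : Fin s → ℕ := fun j => dv j + (if j = j0 then N - D else 0) with hdv'
    have hsum' : (∑ j, dv' j) = N := by
      rw [hdv', Finset.sum_add_distrib, hsum,
        Finset.sum_ite_eq' Finset.univ j0 (fun _ => N - D)]
      simp only [Finset.mem_univ, if_true]
      omega
    have hli' := hNli dv' hsum'
    have key : ∀ (j : Fin s) (i : ℕ), i < dv j → i < m' ∧ i < dv' j := by
      intro j i hi
      have h1 := hdvle j
      have h2 : dv j ≤ dv' j := Nat.le_add_right _ _
      constructor
      · omega
      · omega
    unfold rowsLinIndep at hli' ⊢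
    refine LinearIndependent.of_comp
      (LinearMap.funLeft (ZMod b) (ZMod b) (Fin.castLE hm'le)) ?_
    let ι : {p : Fin s × Fin m // (p.2 : ℕ) < dv p.1} →
        {p : Fin s × Fin m' // (p.2 : ℕ) < dv' p.1} :=
      fun p => ⟨(p.1.1, ⟨(p.1.2 : ℕ), (key p.1.1 p.1.2 p.2).1⟩),
        (key p.1.1 p.1.2 p.2).2⟩
    have hinj : Function.Injective ι := by
      intro p q h
      apply Subtype.ext
      have h1 : p.1.1 = q.1.1 := congrArg (fun x => x.1.1) h
      have h2 : (p.1.2 : ℕ) = (q.1.2 : ℕ) := by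
        have := congrArg (fun x => (x.1.2 : ℕ)) h
        simpa [ι] using this
      exact Prod.ext h1 (Fin.ext h2)
    have hcomp : (LinearMap.funLeft (ZMod b) (ZMod b) (Fin.castLE hm'le)) ∘
        (fun p : {p : Fin s × Fin m // (p.2 : ℕ) < dv p.1} =>
          colRowReduced' (upperLeft (C p.1.1) m) (wr p.1.1) (wc p.1.1) p.1.2)
        = (fun p : {p : Fin s × Fin m' // (p.2 : ℕ) < dv' p.1} =>
            upperLeft (C p.1.1) m' p.1.2) ∘ ι := by
      funext p
      funext r
      simp only [Function.comp_apply, LinearMap.funLeft_apply, colRowReduced',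
        upperLeft, Matrix.of_apply, ι, Fin.coe_castLE]
      rw [if_pos]
      constructor
      · have h1 := hdvle p.1.1
        have h2 := hwr p.1.1
        have h3 := p.2
        omega
      · have h1 := hwc p.1.1
        have h2 := r.isLt
        omega
    rw [hcomp]
    exact hli'.comp ι hinj
  exact le_csSup ⟨m, fun x hx => hx.1⟩ hmem

/-- lower bound with different row and column reduction indices:
`ρ_m(C̃_1,…,C̃_s) ≥ max{0, m − max{w_s^c + t, w_s^r}}`. -/
theorem rho_colRowReduced'_ge (b m s t : ℕ) (hb : Nat.Prime b) (hm : 1 ≤ m) (hs : 1 ≤ s)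
    (ht : t ≤ m) (C : Fin s → Matrix ℕ ℕ (ZMod b))
    (hseq : ∀ m', max t 1 ≤ m' → m' ≤ m →
      m' - t ≤ rho b m' (fun j => upperLeft (C j) m'))
    (wr wc : Fin s → ℕ)
    (hwr1 : wr ⟨0, hs⟩ = 0) (hwrmono : Monotone wr)
    (hwc1 : wc ⟨0, hs⟩ = 0) (hwcmono : Monotone wc) :
    max 0 (m - max (wc ⟨s - 1, by omega⟩ + t) (wr ⟨s - 1, by omega⟩)) ≤
      rho b m (fun j => colRowReduced' (upperLeft (C j) m) (wr j) (wc j)) :=  by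
  rw [Nat.zero_max]
  refine rho_colRowReduced'_aux b m s t hm hs ht C hseq wr wc _ _
    (fun j => hwrmono ?_) (fun j => hwcmono ?_) <;>
  · rw [Fin.le_def]
    have := j.isLt
    simp only []
    omega
end
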